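/- (Lindenbaum lemma for IPCε) Every consistent infinite sequent w₀ can be extended to a maximal consistent infinite sequent. -/

import Mathlib

-- Terms of intuitionistic predicate logic with Hilbert’s ε-symbol (de Bruijn indices).
mutual
inductive Tm : Type
  | var : Nat → Tm
  | const : Nat → Tm
  | eps : Fm → Tm
inductive Tms : Type
  | nil : Tms
  | cons : Tm → Tms → Tms
inductive Fm : Type
  | atom : Nat → Tms → Fm
  | bot : Fm
  | top : Fm
  | and : Fm → Fm → Fm
  | or : Fm → Fm → Fm
  | imp : Fm → Fm → Fm
  | all : Fm → Fm
  | ex : Fm → Fm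
end

-- Lifting (shift de Bruijn variables ≥ c by one).
mutual
def Tm.lift : Nat → Tm → Tm
  | c, .var n => if n < c then .var n else .var (n+1)
  | _, .const k => .const k
  | c, .eps A => .eps (Fm.lift (c+1) A)
def Tms.lift : Nat → Tms → Tms
  | _, .nil => .nil
  | c, .cons t ts => .cons (Tm.lift c t) (Tms.lift c ts)
def Fm.lift : Nat → Fm → Fm
  | c, .atom p ts => .atom p (Tms.lift c ts)
  | _, .bot => .bot
  | _, .top => .top
  | c, .and A B => .and (Fm.lift c A) (Fm.lift c B)
  | c, .or A B => .or (Fm.lift c A) (Fm.lift c B)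
  | c, .imp A B => .imp (Fm.lift c A) (Fm.lift c B)
  | c, .all A => .all (Fm.lift (c+1) A)
  | c, .ex A => .ex (Fm.lift (c+1) A)
end

-- Substitution of a term for de Bruijn variable m.
mutual
def Tm.subst : Nat → Tm → Tm → Tm
  | m, s, .var n => if n < m then .var n else if n = m then s else .var (n-1)
  | _, _, .const k => .const k
  | m, s, .eps A => .eps (Fm.subst (m+1) (Tm.lift 0 s) A)
def Tms.subst : Nat → Tm → Tms → Tms
  | _, _, .nil => .nil
  | m, s, .cons t ts => .cons (Tm.subst m s t) (Tms.subst m s ts)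
def Fm.subst : Nat → Tm → Fm → Fm
  | m, s, .atom p ts => .atom p (Tms.subst m s ts)
  | _, _, .bot => .bot
  | _, _, .top => .top
  | m, s, .and A B => .and (Fm.subst m s A) (Fm.subst m s B)
  | m, s, .or A B => .or (Fm.subst m s A) (Fm.subst m s B)
  | m, s, .imp A B => .imp (Fm.subst m s A) (Fm.subst m s B)
  | m, s, .all A => .all (Fm.subst (m+1) (Tm.lift 0 s) A)
  | m, s, .ex A => .ex (Fm.subst (m+1) (Tm.lift 0 s) A)
end

/-- `A.subst0 t` substitutes `t` for the outermost bound variable. -/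
def Fm.subst0 (A : Fm) (t : Tm) : Fm := Fm.subst 0 t A

/-- `t↓`: definedness of a term.  For `εx A(x)` it is `∃y(∃x A(x) → A(y))`;
for variables and constants it is `⊤`. -/
def Tm.down : Tm → Fm
  | .var _ => .top
  | .const _ => .top
  | .eps A => .ex (.imp (.ex (Fm.lift 1 (Fm.lift 1 A))) (Fm.lift 1 A))

/-- The Gentzen-style sequent calculus IPCε with ε-symbol:
`t↓`-guarded quantifier rules and the ε-form of the `∃`-left rule. -/
inductive IPCe : Set Fm → Fm → Prop
  | ax {Γ A} : A ∈ Γ → IPCe Γ A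
  | botL {Γ A} : Fm.bot ∈ Γ → IPCe Γ A
  | topR {Γ} : IPCe Γ .top
  | andR {Γ A B} : IPCe Γ A → IPCe Γ B → IPCe Γ (.and A B)
  | andL {Γ A B G} : Fm.and A B ∈ Γ → IPCe (insert A (insert B Γ)) G → IPCe Γ G
  | orR₁ {Γ A B} : IPCe Γ A → IPCe Γ (.or A B)
  | orR₂ {Γ A B} : IPCe Γ B → IPCe Γ (.or A B)
  | orL {Γ A B G} : Fm.or A B ∈ Γ → IPCe (insert A Γ) G → IPCe (insert B Γ) G →
      IPCe Γ G
  | impR {Γ A B} : IPCe (insert A Γ) B → IPCe Γ (.imp A B)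
  | impL {Γ A B G} : Fm.imp A B ∈ Γ → IPCe Γ A → IPCe (insert B Γ) G → IPCe Γ G
  | allR {Γ A} : IPCe (Fm.lift 0 '' Γ) A → IPCe Γ (.all A)
  | allL {Γ A t G} : Fm.all A ∈ Γ → IPCe Γ t.down →
      IPCe (insert (A.subst0 t) Γ) G → IPCe Γ G
  | exR {Γ A t} : IPCe Γ t.down → IPCe Γ (A.subst0 t) → IPCe Γ (.ex A)
  | exL {Γ A G} : Fm.ex A ∈ Γ → IPCe (insert (A.subst0 (.eps A)) Γ) G → IPCe Γ G
  | cut {Γ C G} : IPCe Γ C → IPCe (insert C Γ) G → IPCe Γ G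
-- Occurrence of a free de Bruijn variable.
mutual
def Tm.hasVar : Nat → Tm → Prop
  | n, .var m => m = n
  | _, .const _ => False
  | n, .eps A => Fm.hasVar (n+1) A
def Tms.hasVar : Nat → Tms → Prop
  | _, .nil => False
  | n, .cons t ts => Tm.hasVar n t ∨ Tms.hasVar n ts
def Fm.hasVar : Nat → Fm → Prop
  | n, .atom _ ts => Tms.hasVar n ts
  | _, .bot => False
  | _, .top => False
  | n, .and A B => Fm.hasVar n A ∨ Fm.hasVar n B
  | n, .or A B => Fm.hasVar n A ∨ Fm.hasVar n B
  | n, .imp A B => Fm.hasVar n A ∨ Fm.hasVar n B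
  | n, .all A => Fm.hasVar (n+1) A
  | n, .ex A => Fm.hasVar (n+1) A
end

-- Occurrence of a constant.
mutual
def Tm.hasConst : Nat → Tm → Prop
  | _, .var _ => False
  | k, .const m => m = k
  | k, .eps A => Fm.hasConst k A
def Tms.hasConst : Nat → Tms → Prop
  | _, .nil => False
  | k, .cons t ts => Tm.hasConst k t ∨ Tms.hasConst k ts
def Fm.hasConst : Nat → Fm → Prop
  | k, .atom _ ts => Tms.hasConst k ts
  | _, .bot => False
  | _, .top => False
  | k, .and A B => Fm.hasConst k A ∨ Fm.hasConst k B
  | k, .or A B => Fm.hasConst k A ∨ Fm.hasConst k B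
  | k, .imp A B => Fm.hasConst k A ∨ Fm.hasConst k B
  | k, .all A => Fm.hasConst k A
  | k, .ex A => Fm.hasConst k A
end

/-- An infinite sequent: a pair of sets of formulas. -/
structure ISeq : Type where
  ant : Set Fm
  suc : Set Fm

/-- Well-formedness: infinitely many variables do not occur in the sequent. -/
def ISeq.Good (w : ISeq) : Prop :=
  {n : Nat | ∀ F ∈ w.ant ∪ w.suc, ¬ Fm.hasVar n F}.Infinite

/-- A formula is in the language `L_w` of `w`: all its free variables and constants
occur in formulas of `w`. -/
def ISeq.InLang (w : ISeq) (F : Fm) : Prop :=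
  (∀ n, Fm.hasVar n F → ∃ G ∈ w.ant ∪ w.suc, Fm.hasVar n G) ∧
  (∀ k, Fm.hasConst k F → ∃ G ∈ w.ant ∪ w.suc, Fm.hasConst k G)

/-- A term is in the language `L_w` of `w`. -/
def ISeq.TmInLang (w : ISeq) (t : Tm) : Prop :=
  (∀ n, Tm.hasVar n t → ∃ G ∈ w.ant ∪ w.suc, Fm.hasVar n G) ∧
  (∀ k, Tm.hasConst k t → ∃ G ∈ w.ant ∪ w.suc, Fm.hasConst k G)

/-- Consistency of an infinite sequent: no finite sequent `Γ₀ ⇒ ⋁Δ₀` with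
`Γ₀ ⊆ w_a`, `Δ₀ ⊆ w_s` is derivable in IPCε. -/
def ISeq.Consistent (w : ISeq) : Prop :=
  ¬ ∃ (L₁ L₂ : List Fm), (∀ F ∈ L₁, F ∈ w.ant) ∧ (∀ F ∈ L₂, F ∈ w.suc) ∧
      IPCe {F | F ∈ L₁} (L₂.foldr Fm.or Fm.bot)

/-- Maximal consistency: consistent and containing every formula of its language. -/
def ISeq.MaxConsistent (w : ISeq) : Prop :=
  w.Consistent ∧ ∀ F, w.InLang F → F ∈ w.ant ∪ w.suc

/-- The set `D(w)` of terms of the language of `w` that are defined in `w`,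
i.e. `t↓ ∈ w_a`. -/
def ISeq.D (w : ISeq) : Set Tm :=
  {t | w.TmInLang t ∧ Tm.down t ∈ w.ant}

/-- Weakening for IPCε. -/
theorem IPCe.weaken {Γ Γ' : Set Fm} {G : Fm} (h : IPCe Γ G) (hs : Γ ⊆ Γ') :
    IPCe Γ' G := by
  induction h generalizing Γ' with
  | ax hm => exact IPCe.ax (hs hm)
  | botL hm => exact IPCe.botL (hs hm)
  | topR => exact IPCe.topR
  | andR _ _ ih₁ ih₂ => exact IPCe.andR (ih₁ hs) (ih₂ hs)
  | andL hm _ ih =>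
      exact IPCe.andL (hs hm) (ih (Set.insert_subset_insert (Set.insert_subset_insert hs)))
  | orR₁ _ ih => exact IPCe.orR₁ (ih hs)
  | orR₂ _ ih => exact IPCe.orR₂ (ih hs)
  | orL hm _ _ ih₁ ih₂ =>
      exact IPCe.orL (hs hm) (ih₁ (Set.insert_subset_insert hs))
        (ih₂ (Set.insert_subset_insert hs))
  | impR _ ih => exact IPCe.impR (ih (Set.insert_subset_insert hs))
  | impL hm _ _ ih₁ ih₂ =>
      exact IPCe.impL (hs hm) (ih₁ hs) (ih₂ (Set.insert_subset_insert hs))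
  | allR _ ih => exact IPCe.allR (ih (Set.image_mono hs))
  | allL hm _ _ ih₁ ih₂ =>
      exact IPCe.allL (hs hm) (ih₁ hs) (ih₂ (Set.insert_subset_insert hs))
  | exR _ _ ih₁ ih₂ => exact IPCe.exR (ih₁ hs) (ih₂ hs)
  | exL hm _ ih => exact IPCe.exL (hs hm) (ih (Set.insert_subset_insert hs))
  | cut _ _ ih₁ ih₂ => exact IPCe.cut (ih₁ hs) (ih₂ (Set.insert_subset_insert hs))

/-- Disjunction introduction from any member. -/
theorem IPCe.disjR {Γ : Set Fm} {A : Fm} (L : List Fm) (hA : A ∈ L)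
    (h : IPCe Γ A) : IPCe Γ (L.foldr Fm.or Fm.bot) := by
  induction L with
  | nil => cases hA
  | cons B L ih =>
      rcases List.mem_cons.mp hA with rfl | hA
      · exact IPCe.orR₁ h
      · exact IPCe.orR₂ (ih hA)

/-- Disjunction elimination. -/
theorem IPCe.disjL {G : Fm} (L : List Fm) : ∀ (Γ : Set Fm),
    (∀ A ∈ L, IPCe (insert A Γ) G) → IPCe (insert (L.foldr Fm.or Fm.bot) Γ) G := by
  induction L with
  | nil => intro Γ _; exact IPCe.botL (Set.mem_insert _ _)
  | cons B L ih =>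
      intro Γ h
      refine IPCe.orL (Set.mem_insert _ _) ?_ ?_
      · exact (h B (List.mem_cons_self)).weaken
          (Set.insert_subset_insert (Set.subset_insert _ _))
      · exact ih _ fun A hA => (h A (List.mem_cons_of_mem _ hA)).weaken
          (Set.insert_subset_insert (Set.subset_insert _ _))

/-- Monotonicity of disjunctions. -/
theorem IPCe.disjMono {Γ : Set Fm} {L L' : List Fm} (hs : ∀ A ∈ L, A ∈ L')
    (h : IPCe Γ (L.foldr Fm.or Fm.bot)) : IPCe Γ (L'.foldr Fm.or Fm.bot) :=
  IPCe.cut h (IPCe.disjL L Γ fun A hA =>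
    IPCe.disjR L' (hs A hA) (IPCe.ax (Set.mem_insert _ _)))

/-- The cut argument for extension: if adding `F` on either side yields an
inconsistent sequent, then the sequent was already inconsistent. -/
theorem key_cut {a s : Set Fm} {F : Fm}
    (h1 : ¬ ISeq.Consistent ⟨insert F a, s⟩)
    (h2 : ¬ ISeq.Consistent ⟨a, insert F s⟩) : ¬ ISeq.Consistent ⟨a, s⟩ := by
  classical
  obtain ⟨L₁, L₂, hL₁, hL₂, d₁⟩ := not_not.mp h1
  obtain ⟨M₁, M₂, hM₁, hM₂, d₂⟩ := not_not.mp h2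
  intro hcon
  set L₁' : List Fm := L₁.filter (fun x => x ∈ a) with hL₁'def
  set Γ : Set Fm := {x | x ∈ L₁' ++ M₁} with hΓdef
  have hL₁'a : ∀ x ∈ L₁', x ∈ a := by
    intro x hx; exact of_decide_eq_true (List.mem_filter.mp hx).2
  have hΓa : ∀ x ∈ L₁' ++ M₁, x ∈ a := by
    intro x hx
    rcases List.mem_append.mp hx with hx | hx
    · exact hL₁'a x hx
    · exact hM₁ x hx
  -- weaken d₂ to Γ
  have dM : IPCe Γ (M₂.foldr Fm.or Fm.bot) := by
    refine d₂.weaken ?_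
    intro x hx
    exact List.mem_append.mpr (Or.inr hx)
  -- weaken d₁ to insert F Γ
  have dF : IPCe (insert F Γ) (L₂.foldr Fm.or Fm.bot) := by
    refine d₁.weaken ?_
    intro x hx
    rcases hL₁ x hx with hxa | hxa
    · exact Or.inl hxa
    · exact Or.inr (List.mem_append.mpr (Or.inl (List.mem_filter.mpr ⟨hx, decide_eq_true hxa⟩)))
  set N : List Fm := L₂ ++ M₂.filter (fun x => x ∈ s) with hNdef
  have hNs : ∀ x ∈ N, x ∈ s := by
    intro x hx
    rcases List.mem_append.mp hx with hx | hx
    · exact hL₂ x hx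
    · exact of_decide_eq_true (List.mem_filter.mp hx).2
  have dN : IPCe Γ (N.foldr Fm.or Fm.bot) := by
    refine IPCe.cut dM (IPCe.disjL M₂ Γ ?_)
    intro B hB
    rcases hM₂ B hB with rfl | hBs
    · exact IPCe.disjMono (fun A hA => List.mem_append.mpr (Or.inl hA)) dF
    · exact IPCe.disjR N
        (List.mem_append.mpr (Or.inr (List.mem_filter.mpr ⟨hB, decide_eq_true hBs⟩)))
        (IPCe.ax (Set.mem_insert _ _))
  exact hcon ⟨L₁' ++ M₁, N, hΓa, hNs, dN⟩

/-- Bounding a finite tagged list of memberships inside a chain. -/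
theorem chain_bound {c : Set (Set Fm × Set Fm)} (hc : IsChain (· ≤ ·) c)
    {p₀ : Set Fm × Set Fm} (hp₀ : p₀ ∈ c) (L : List (Fm × Bool))
    (hL : ∀ q ∈ L, ∃ p ∈ c, q.1 ∈ (if q.2 then p.1 else p.2)) :
    ∃ p ∈ c, ∀ q ∈ L, q.1 ∈ (if q.2 then p.1 else p.2) := by
  induction L with
  | nil => exact ⟨p₀, hp₀, by simp⟩
  | cons q L ih =>
      obtain ⟨p, hp, hall⟩ := ih fun r hr => hL r (List.mem_cons_of_mem _ hr)
      obtain ⟨r, hr, hq⟩ := hL q (List.mem_cons_self)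
      rcases hc.total hp hr with hpr | hrp
      · refine ⟨r, hr, ?_⟩
        intro x hx
        rcases List.mem_cons.mp hx with rfl | hx
        · exact hq
        · have := hall x hx
          cases hb : x.2 <;> simp only [hb] at this ⊢
          · exact hpr.2 this
          · exact hpr.1 this
      · refine ⟨p, hp, ?_⟩
        intro x hx
        rcases List.mem_cons.mp hx with rfl | hx
        · cases hb : x.2 <;> simp only [hb] at hq ⊢
          · exact hrp.2 hq
          · exact hrp.1 hq
        · exact hall x hx

/-- Lindenbaum lemma for IPCε: every consistent infinite sequent can
be extended to a maximal consistent infinite sequent. -/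
theorem lindenbaum_IPCe (w₀ : ISeq) (hgood : w₀.Good) (hcon : w₀.Consistent) :
    ∃ w : ISeq, w₀.ant ⊆ w.ant ∧ w₀.suc ⊆ w.suc ∧ w.MaxConsistent := by
  classical
  set S : Set (Set Fm × Set Fm) :=
    {p | w₀.ant ⊆ p.1 ∧ w₀.suc ⊆ p.2 ∧ ISeq.Consistent ⟨p.1, p.2⟩} with hSdef
  have hzorn : ∃ m, (w₀.ant, w₀.suc) ≤ m ∧ Maximal (· ∈ S) m := by
    refine zorn_le_nonempty₀ S ?_ (w₀.ant, w₀.suc) ⟨subset_rfl, subset_rfl, hcon⟩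
    intro c hcS hchain y hy
    refine ⟨(⋃ p ∈ c, p.1, ⋃ p ∈ c, p.2), ⟨?_, ?_, ?_⟩, ?_⟩
    · exact (hcS hy).1.trans (Set.subset_biUnion_of_mem hy)
    · exact (hcS hy).2.1.trans (Set.subset_biUnion_of_mem hy)
    · rintro ⟨L₁, L₂, hL₁, hL₂, d⟩
      have hmem : ∀ q ∈ (L₁.map (·, true) ++ L₂.map (·, false)),
          ∃ p ∈ c, q.1 ∈ (if q.2 then p.1 else p.2) := by
        intro q hq
        rcases List.mem_append.mp hq with hq | hq
        · obtain ⟨F, hF, rfl⟩ := List.mem_map.mp hq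
          simpa using Set.mem_iUnion₂.mp (hL₁ F hF)
        · obtain ⟨F, hF, rfl⟩ := List.mem_map.mp hq
          simpa using Set.mem_iUnion₂.mp (hL₂ F hF)
      obtain ⟨p, hp, hall⟩ := chain_bound hchain hy _ hmem
      refine (hcS hp).2.2 ⟨L₁, L₂, ?_, ?_, d⟩
      · intro F hF
        have := hall (F, true) (List.mem_append.mpr (Or.inl (List.mem_map.mpr ⟨F, hF, rfl⟩)))
        simpa using this
      · intro F hF
        have := hall (F, false) (List.mem_append.mpr (Or.inr (List.mem_map.mpr ⟨F, hF, rfl⟩)))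
        simpa using this
    · intro z hz
      exact ⟨Set.subset_biUnion_of_mem hz, Set.subset_biUnion_of_mem hz⟩
  obtain ⟨m, hle, hmS, hmax⟩ := hzorn
  refine ⟨⟨m.1, m.2⟩, hmS.1, hmS.2.1, hmS.2.2, ?_⟩
  intro F _
  by_contra hF
  simp only [Set.mem_union] at hF
  push_neg at hF
  have h1 : ¬ ISeq.Consistent ⟨insert F m.1, m.2⟩ := by
    intro hc1
    have hz : (insert F m.1, m.2) ∈ S :=
      ⟨hmS.1.trans (Set.subset_insert _ _), hmS.2.1, hc1⟩
    have := hmax hz ⟨Set.subset_insert _ _, subset_rfl⟩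
    exact hF.1 (this.1 (Set.mem_insert _ _))
  have h2 : ¬ ISeq.Consistent ⟨m.1, insert F m.2⟩ := by
    intro hc2
    have hz : (m.1, insert F m.2) ∈ S :=
      ⟨hmS.1, hmS.2.1.trans (Set.subset_insert _ _), hc2⟩
    have := hmax hz ⟨subset_rfl, Set.subset_insert _ _⟩
    exact hF.2 (this.2 (Set.mem_insert _ _))
  exact key_cut h1 h2 hmS.2.2
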